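/- Let K be an algebraically closed field of characteristic p ≥ 0, let n ≥ 1 and s ≥ 0 be integers, and let μ_1,…,μ_s be integers with each μ_j ≥ 2. Let Γ = F_n ∗ ℤ/μ_1 ∗ ⋯ ∗ ℤ/μ_s be the free product of a free group of rank n with cyclic groups of orders μ_1,…,μ_s, and let γ_j be a generator of the j-th cyclic factor. Let ρ : Γ → K^× be a group homomorphism that is not the trivial character, set λ_j = ρ(γ_j), and let ℓ be the number of indices j ∈ {1,…,s} with λ_j = 1 and p ∤ μ_j. Then the first group cohomology of Γ with coefficients in the one-dimensional representation K_ρ satisfies dim_K H^1(Γ, K_ρ) = n + s − ℓ − 1. -/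

import Mathlib

/-- Relations presenting the free product `F_n ∗ ℤ/μ₁ ∗ ⋯ ∗ ℤ/μ_s`: the generators
indexed by `Fin n` are free, and the generator `γ_j` satisfies `γ_j ^ μ_j = 1`. -/
def orbRels (n s : ℕ) (μ : Fin s → ℕ) : Set (FreeGroup (Fin n ⊕ Fin s)) :=
  Set.range fun j : Fin s => FreeGroup.of (Sum.inr j) ^ μ j

/-- The free product `Γ = F_n ∗ ℤ/μ₁ ∗ ⋯ ∗ ℤ/μ_s`. -/
abbrev OrbGroup (n s : ℕ) (μ : Fin s → ℕ) : Type := PresentedGroup (orbRels n s μ)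

/-- The generator `γ_j` of the `j`-th cyclic factor of `Γ`. -/
def orbGamma (n s : ℕ) (μ : Fin s → ℕ) (j : Fin s) : OrbGroup n s μ :=
  PresentedGroup.of (Sum.inr j)

/-- The one-dimensional representation `K_ρ` attached to a character `ρ : G → Kˣ`:
`g ∈ G` acts on `K` by multiplication by `ρ g`. -/
def charRep {K : Type} [CommRing K] {G : Type} [Group G] (ρ : G →* Kˣ) :
    Representation K G K where
  toFun g := (ρ g : K) • (1 : K →ₗ[K] K)
  map_one' := by simp
  map_mul' g h := by
    ext
    simp [mul_smul, mul_comm]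



variable {K : Type} [Field K]

@[ext] structure AffK (K : Type) [Field K] where
  a : K
  u : Kˣ

namespace AffK

instance : Mul (AffK K) := ⟨fun x y => ⟨x.a + (x.u : K) * y.a, x.u * y.u⟩⟩
instance : One (AffK K) := ⟨⟨0, 1⟩⟩
instance : Inv (AffK K) := ⟨fun x => ⟨-((x.u⁻¹ : Kˣ) : K) * x.a, x.u⁻¹⟩⟩

@[simp] lemma mul_a (x y : AffK K) : (x * y).a = x.a + (x.u : K) * y.a := rfl
@[simp] lemma mul_u (x y : AffK K) : (x * y).u = x.u * y.u := rfl
@[simp] lemma one_a : (1 : AffK K).a = 0 := rfl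
@[simp] lemma one_u : (1 : AffK K).u = 1 := rfl

instance : Group (AffK K) where
  mul_assoc x y z := by ext <;> simp <;> ring
  one_mul x := by ext <;> simp
  mul_one x := by ext <;> simp
  inv_mul_cancel x := by
    ext
    · show -((x.u⁻¹ : Kˣ) : K) * x.a + ((x.u⁻¹ : Kˣ) : K) * x.a = 0
      ring
    · show ((x.u⁻¹ * x.u : Kˣ) : K) = ((1 : Kˣ) : K)
      simp

def sndHom : AffK K →* Kˣ where
  toFun x := x.u
  map_one' := rfl
  map_mul' _ _ := rfl

@[simp] lemma sndHom_apply (x : AffK K) : sndHom x = x.u := rfl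

lemma pow_u (x : AffK K) (m : ℕ) : (x ^ m).u = x.u ^ m := by
  induction m with
  | zero => simp
  | succ m ih => rw [pow_succ, pow_succ, mul_u, ih]

lemma pow_a (x : AffK K) (m : ℕ) :
    (x ^ m).a = (∑ i ∈ Finset.range m, (x.u : K) ^ i) * x.a := by
  induction m with
  | zero => simp
  | succ m ih =>
      rw [pow_succ, mul_a, ih, pow_u, geom_sum_succ']
      push_cast
      ring

end AffK

namespace groupCohomology

variable {k G : Type} [CommRing k] [Group G] (A : Rep k G)

abbrev oneCocycles : Submodule k (G → A) := cocycles₁ A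

def dZero : A →ₗ[k] (G → A) := (d₀₁ A).hom

def dZeroToOneCocycles : A →ₗ[k] oneCocycles A :=
  (d₀₁ A).hom.codRestrict _ (fun x => d₀₁_apply_mem_cocycles₁ (A := A) x)

def oneCoboundaries : Submodule k (oneCocycles A) := LinearMap.range (dZeroToOneCocycles A)

variable {A}

lemma mem_oneCocycles_iff (f : G → A) :
    f ∈ oneCocycles A ↔ ∀ g h : G, f (g * h) = A.ρ g (f h) + f g :=
  mem_cocycles₁_iff f

lemma oneCocycles_map_one (f : oneCocycles A) : f 1 = 0 := cocycles₁_map_one f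

end groupCohomology

section cocycleHom

variable {G : Type} [Group G] (ρ : G →* Kˣ)

open groupCohomology

lemma charRep_apply (g : G) (x : K) : ((Rep.of (charRep ρ)).ρ g) x = (ρ g : K) * x := by
  rfl

lemma mem_oneCocycles_charRep (f : G → K) :
    f ∈ oneCocycles (Rep.of (charRep ρ)) ↔
      ∀ g h : G, f (g * h) = (ρ g : K) * f h + f g := by
  rw [mem_oneCocycles_iff]
  simp only [charRep_apply]
  exact Iff.rfl

/-- The monoid hom into the affine group attached to a 1-cocycle. -/
def homOfCocycle (f : oneCocycles (Rep.of (charRep ρ))) : G →* AffK K where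
  toFun g := ⟨f g, ρ g⟩
  map_one' := by
    ext
    · simpa using oneCocycles_map_one f
    · simp
  map_mul' g h := by
    ext
    · simpa [add_comm] using ((mem_oneCocycles_charRep ρ f).mp f.2 g h)
    · simp

lemma homOfCocycle_apply (f : oneCocycles (Rep.of (charRep ρ))) (g : G) :
    homOfCocycle ρ f g = ⟨f g, ρ g⟩ := rfl

/-- Conversely, a hom into the affine group lifting `ρ` gives a 1-cocycle. -/
lemma cocycleOfHom (h : G →* AffK K) (hh : ∀ g, (h g).u = ρ g) :
    (fun g => (h g).a) ∈ oneCocycles (Rep.of (charRep ρ)) := by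
  rw [mem_oneCocycles_charRep]
  intro g g'
  rw [map_mul]
  rw [AffK.mul_a, hh, add_comm]

end cocycleHom

section orb

variable (n s : ℕ) (μ : Fin s → ℕ)

lemma orbGamma_pow (j : Fin s) : orbGamma n s μ j ^ μ j = 1 := by
  have : (FreeGroup.of (Sum.inr j) ^ μ j : FreeGroup (Fin n ⊕ Fin s)) ∈
      Subgroup.normalClosure (orbRels n s μ) :=
    Subgroup.subset_normalClosure ⟨j, rfl⟩
  show (PresentedGroup.mk (orbRels n s μ) (FreeGroup.of (Sum.inr j))) ^ μ j = 1
  rw [← map_pow]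
  exact (QuotientGroup.eq_one_iff _).mpr this

variable (ρ : OrbGroup n s μ →* Kˣ)

open groupCohomology Finset

/-- The geometric-sum coefficient. -/
noncomputable def orbC (j : Fin s) : K :=
  ∑ i ∈ Finset.range (μ j), ((ρ (orbGamma n s μ j) : Kˣ) : K) ^ i

/-- Values of a cocycle, as a map to `K`. -/
def cocFun {G : Type} [Group G] (ρ : G →* Kˣ) (f : oneCocycles (Rep.of (charRep ρ))) : G → K := f

lemma cocycle_constraint (f : oneCocycles (Rep.of (charRep ρ))) (j : Fin s) :
    orbC n s μ ρ j * cocFun ρ f (orbGamma n s μ j) = 0 := by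
  have h1 : homOfCocycle ρ f (orbGamma n s μ j ^ μ j) = 1 := by
    rw [orbGamma_pow, map_one]
  rw [map_pow] at h1
  have := congrArg AffK.a h1
  rw [AffK.pow_a] at this
  simpa [homOfCocycle_apply, orbC, cocFun] using this


lemma cocycle_eq_zero (f : oneCocycles (Rep.of (charRep ρ)))
    (h0 : ∀ i, cocFun ρ f (PresentedGroup.of i) = 0) (g : OrbGroup n s μ) :
    cocFun ρ f g = 0 := by
  have hcoc := (mem_oneCocycles_charRep ρ (cocFun ρ f)).mp f.2
  have h1 : cocFun ρ f 1 = 0 := oneCocycles_map_one f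
  let S : Subgroup (OrbGroup n s μ) :=
  { carrier := {g | cocFun ρ f g = 0}
    one_mem' := h1
    mul_mem' := by
      intro a b ha hb
      show cocFun ρ f (a * b) = 0
      rw [hcoc a b, ha, hb, mul_zero, add_zero]
    inv_mem' := by
      intro a ha
      show cocFun ρ f a⁻¹ = 0
      have := hcoc a a⁻¹
      rw [mul_inv_cancel, h1, ha, add_zero] at this
      exact (Units.mul_right_eq_zero (ρ a)).mp this.symm }
  exact PresentedGroup.generated_by _ S h0 g

lemma exists_cocycle (v : Fin n ⊕ Fin s → K)
    (hv : ∀ j, orbC n s μ ρ j * v (Sum.inr j) = 0) :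
    ∃ f : oneCocycles (Rep.of (charRep ρ)),
      ∀ i, cocFun ρ f (PresentedGroup.of i) = v i := by
  set fv : Fin n ⊕ Fin s → AffK K :=
    fun i => ⟨v i, ρ (PresentedGroup.of i)⟩ with hfv
  have hrel : ∀ r ∈ orbRels n s μ, FreeGroup.lift fv r = 1 := by
    rintro r ⟨j, rfl⟩
    rw [map_pow, FreeGroup.lift_apply_of]
    ext
    · show (fv (Sum.inr j) ^ μ j).a = 0
      rw [AffK.pow_a]
      exact hv j
    · show ((fv (Sum.inr j) ^ μ j).u : K) = ((1 : Kˣ) : K)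
      rw [AffK.pow_u]
      show ((ρ (orbGamma n s μ j) ^ μ j : Kˣ) : K) = _
      rw [← map_pow, orbGamma_pow, map_one]
  set h : OrbGroup n s μ →* AffK K := PresentedGroup.toGroup hrel with hh
  have hu : ∀ g, (h g).u = ρ g := by
    have : (AffK.sndHom).comp h = ρ := by
      apply PresentedGroup.ext
      intro i
      simp [hh, PresentedGroup.toGroup.of, hfv]
    intro g
    exact congrFun (congrArg DFunLike.coe this) g
  refine ⟨⟨fun g => (h g).a, cocycleOfHom ρ h hu⟩, fun i => ?_⟩
  show (h (PresentedGroup.of i)).a = v i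
  rw [hh, PresentedGroup.toGroup.of]

lemma orbC_eq_zero_iff (j : Fin s) :
    orbC n s μ ρ j = 0 ↔
      ¬(ρ (orbGamma n s μ j) = 1 ∧ ¬ ringChar K ∣ μ j) := by
  have hL : ρ (orbGamma n s μ j) ^ μ j = 1 := by
    rw [← map_pow, orbGamma_pow, map_one]
  by_cases h1 : ρ (orbGamma n s μ j) = 1
  · have : orbC n s μ ρ j = (μ j : K) := by simp [orbC, h1]
    rw [this, CharP.cast_eq_zero_iff K (ringChar K) (μ j)]
    simp [h1]
  · have hne : ((ρ (orbGamma n s μ j) : Kˣ) : K) - 1 ≠ 0 := by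
      intro hc
      exact h1 (Units.ext (by simpa using sub_eq_zero.mp hc))
    have : orbC n s μ ρ j * (((ρ (orbGamma n s μ j) : Kˣ) : K) - 1) = 0 := by
      rw [orbC, geom_sum_mul, ← Units.val_pow_eq_pow_val, hL, Units.val_one, sub_self]
    simp only [mul_eq_zero, hne, or_false] at this
    simp [this, h1]

/-- Value of an element of the representation space, as an element of `K`. -/
def repVal {G : Type} [Group G] (ρ : G →* Kˣ) (x : Rep.of (charRep ρ)) : K := x

lemma finrank_oneCoboundaries (hρ : ρ ≠ 1) :
    Module.finrank K (oneCoboundaries (Rep.of (charRep ρ))) = 1 := by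
  have hinj : Function.Injective (dZero (Rep.of (charRep ρ))) := by
    intro x y hxy
    obtain ⟨g, hg⟩ := DFunLike.ne_iff.mp hρ
    have h2 : (Rep.of (charRep ρ)).ρ g x - x = (Rep.of (charRep ρ)).ρ g y - y :=
      congrFun hxy g
    have h3 : (ρ g : K) * repVal ρ x - repVal ρ x
        = (ρ g : K) * repVal ρ y - repVal ρ y := h2
    have h4 : ((ρ g : K) - 1) * (repVal ρ x - repVal ρ y) = 0 := by linear_combination h3
    have h5 : ((ρ g : K) - 1) ≠ 0 := by
      intro hc
      exact hg (Units.ext (by simpa using sub_eq_zero.mp hc))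
    have h6 := (mul_eq_zero.mp h4).resolve_left h5
    exact sub_eq_zero.mp h6
  have h7 : Module.finrank K ↥(oneCoboundaries (Rep.of (charRep ρ)))
      = Module.finrank K (Rep.of (charRep ρ)) := by
    unfold groupCohomology.oneCoboundaries
    apply LinearMap.finrank_range_of_inj
    intro a b hab
    exact hinj (congrArg Subtype.val hab)
  rw [h7]
  exact Module.finrank_self K

/-- The "good coordinates" predicate. -/
def orbP (j : Fin s) : Prop := orbC n s μ ρ j = 0

/-- The evaluation of cocycles at the generators, as a linear equivalence onto the
functions supported on good coordinates. -/
noncomputable def cocyclesEquiv :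
    oneCocycles (Rep.of (charRep ρ)) ≃ₗ[K]
      ({i : Fin n ⊕ Fin s // ∀ j, i = Sum.inr j → orbP n s μ ρ j} → K) := by
  classical
  set P : Fin n ⊕ Fin s → Prop := fun i => ∀ j, i = Sum.inr j → orbP n s μ ρ j with hP
  refine LinearEquiv.ofBijective
    { toFun := fun f i => cocFun ρ f (PresentedGroup.of i.1)
      map_add' := fun f g => by funext i; rfl
      map_smul' := fun c f => by funext i; rfl } ⟨?_, ?_⟩
  · rw [← LinearMap.ker_eq_bot, eq_bot_iff]
    intro f hf
    have hf0 : ∀ i, cocFun ρ f (PresentedGroup.of i) = 0 := by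
      intro i
      by_cases hi : P i
      · exact congrFun hf ⟨i, hi⟩
      · simp only [hP, not_forall] at hi
        obtain ⟨j, hij, hj⟩ := hi
        subst hij
        exact (mul_eq_zero.mp (cocycle_constraint n s μ ρ f j)).resolve_left hj
    exact Subtype.ext (funext (cocycle_eq_zero n s μ ρ f hf0))
  · intro w
    set v : Fin n ⊕ Fin s → K := fun i => if h : P i then w ⟨i, h⟩ else 0 with hv
    have hvc : ∀ j, orbC n s μ ρ j * v (Sum.inr j) = 0 := by
      intro j
      by_cases hc : orbC n s μ ρ j = 0
      · rw [hc, zero_mul]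
      · have hnp : ¬ P (Sum.inr j) := fun h => hc (h j rfl)
        rw [hv]
        simp only [hnp, dif_neg, not_false_iff, mul_zero]
    obtain ⟨f, hf⟩ := exists_cocycle n s μ ρ v hvc
    refine ⟨f, funext fun i => ?_⟩
    show cocFun ρ f (PresentedGroup.of i.1) = w i
    rw [hf i.1, hv]
    exact dif_pos i.2

lemma finrank_oneCocycles :
    Module.finrank K (oneCocycles (Rep.of (charRep ρ))) =
      n + (s - Nat.card {j : Fin s // ρ (orbGamma n s μ j) = 1 ∧ ¬ (ringChar K ∣ μ j)}) := by
  classical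
  rw [(cocyclesEquiv n s μ ρ).finrank_eq, Module.finrank_pi K]
  have e1 : {i : Fin n ⊕ Fin s // ∀ j, i = Sum.inr j → orbP n s μ ρ j} ≃
      {a : Fin n // ∀ j, Sum.inl a = Sum.inr j → orbP n s μ ρ j} ⊕
      {j' : Fin s // ∀ j, (Sum.inr j' : Fin n ⊕ Fin s) = Sum.inr j → orbP n s μ ρ j} :=
    Equiv.subtypeSum
  have e2 : {a : Fin n // ∀ j, Sum.inl a = Sum.inr j → orbP n s μ ρ j} ≃ Fin n :=
    Equiv.subtypeUnivEquiv (fun a j h => by cases h)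
  have e3 : {j' : Fin s // ∀ j, (Sum.inr j' : Fin n ⊕ Fin s) = Sum.inr j → orbP n s μ ρ j} ≃
      {j : Fin s // ¬(ρ (orbGamma n s μ j) = 1 ∧ ¬ ringChar K ∣ μ j)} :=
    Equiv.subtypeEquivRight (fun j => by
      constructor
      · intro h
        exact (orbC_eq_zero_iff n s μ ρ j).mp (h j rfl)
      · intro h j' hj'
        cases hj'
        exact (orbC_eq_zero_iff n s μ ρ j).mpr h)
  rw [Fintype.card_congr (e1.trans (Equiv.sumCongr e2 e3)), Fintype.card_sum, Fintype.card_fin]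
  congr 1
  rw [Fintype.card_subtype_compl, Fintype.card_fin, Nat.card_eq_fintype_card]

end orb


/-- let `K` be an algebraically closed field of characteristic `p ≥ 0`,
`n ≥ 1`, `s ≥ 0`, `μ_j ≥ 2`, `Γ = F_n ∗ ℤ/μ₁ ∗ ⋯ ∗ ℤ/μ_s`, and `ρ : Γ → Kˣ` a
nontrivial character.  With `ℓ = #{j | ρ(γ_j) = 1 and p ∤ μ_j}`, one has
`dim_K H¹(Γ, K_ρ) = n + s - ℓ - 1`. -/
theorem stmt5 (K : Type) [Field K] [IsAlgClosed K] (n s : ℕ) (hn : 1 ≤ n)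
    (μ : Fin s → ℕ) (hμ : ∀ j, 2 ≤ μ j)
    (ρ : OrbGroup n s μ →* Kˣ) (hρ : ρ ≠ 1) :
    Module.finrank K (groupCohomology.H1 (Rep.of (charRep ρ))) =
      n + s - Nat.card {j : Fin s // ρ (orbGamma n s μ j) = 1 ∧ ¬ (ringChar K ∣ μ j)} - 1 := by
  classical
  set ℓ := Nat.card {j : Fin s // ρ (orbGamma n s μ j) = 1 ∧ ¬ (ringChar K ∣ μ j)} with hl
  have hZ : Module.finrank K (groupCohomology.oneCocycles (Rep.of (charRep ρ))) = n + (s - ℓ) :=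
    finrank_oneCocycles n s μ ρ
  have hB : Module.finrank K (groupCohomology.oneCoboundaries (Rep.of (charRep ρ))) = 1 :=
    finrank_oneCoboundaries n s μ ρ hρ
  have hfd : FiniteDimensional K (groupCohomology.oneCocycles (Rep.of (charRep ρ))) :=
    (cocyclesEquiv n s μ ρ).symm.finiteDimensional
  have hq := Submodule.finrank_quotient_add_finrank
    (groupCohomology.oneCoboundaries (Rep.of (charRep ρ)))
  rw [hB, hZ] at hq
  have hls : ℓ ≤ s := by
    rw [hl, Nat.card_eq_fintype_card]
    calc Fintype.card {j : Fin s // ρ (orbGamma n s μ j) = 1 ∧ ¬ (ringChar K ∣ μ j)}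
        ≤ Fintype.card (Fin s) := Fintype.card_subtype_le _
      _ = s := Fintype.card_fin s
  have hH : Module.finrank K (groupCohomology.H1 (Rep.of (charRep ρ)))
      = Module.finrank K (groupCohomology.oneCocycles (Rep.of (charRep ρ)) ⧸
          groupCohomology.oneCoboundaries (Rep.of (charRep ρ))) := by
      have hs : Function.Surjective (groupCohomology.H1π (Rep.of (charRep ρ))).hom :=
        (ModuleCat.epi_iff_surjective _).mp inferInstance
      have hk : LinearMap.ker (groupCohomology.H1π (Rep.of (charRep ρ))).hom =
          groupCohomology.oneCoboundaries (Rep.of (charRep ρ)) := by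
        ext x
        rw [LinearMap.mem_ker]
        exact (groupCohomology.H1π_eq_zero_iff x).trans
          ⟨fun ⟨a, ha⟩ => ⟨a, Subtype.ext ha⟩, fun ⟨a, ha⟩ => ⟨a, congrArg Subtype.val ha⟩⟩
      exact ((LinearMap.quotKerEquivOfSurjective _ hs).symm.trans
        (Submodule.quotEquivOfEq _ _ hk)).finrank_eq
  rw [hH]
  omega
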